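/- (Propagation preserves the unobservable directions of the imperfect augmented system.) For every gravity vector g ∈ ℝ³, arbitrary estimates R̂_I ∈ ℝ^{3×3}, v̂, p̂_I, p̂_f, p̂_G ∈ ℝ³, arbitrary R_G ∈ ℝ^{3×3} and p_F ∈ ℝ³, the 33×33 imperfect-system propagation matrix A* satisfies A* N*₁ = 0; consequently the state-transition matrix exp(δ A*) satisfies exp(δ A*) N*₁ = N*₁ for every δ ∈ ℝ. -/

import Mathlib

open Matrix

abbrev V3 := Fin 3 → ℝ
abbrev M3 := Matrix (Fin 3) (Fin 3) ℝ

/-- The cross-product (skew-symmetric) matrix `(a)_×`. -/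
def skew (a : V3) : M3 :=
  !![0, -a 2, a 1; a 2, 0, -a 0; -a 1, a 0, 0]

/-- Row/column index of the 33-dimensional right-invariant error
`(ξ_θ, ξ_v, ξ_p, ξ_pf, ξ_pG, ξ_θG, ξ_bg, ξ_ba, ξ_θKF, ξ_pKF, ξ_F)`: 11 blocks of 3. -/
abbrev Idx33 := Fin 11 × Fin 3

/-- Column index for the 33×10 unobservable-direction matrix:
one single column followed by three 3-column blocks. -/
abbrev Cols10 := Fin 1 ⊕ Fin 3 × Fin 3

/-- 33×33 matrix from an 11×11 table of 3×3 blocks. -/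
def bm11 (f : Fin 11 → Fin 11 → M3) : Matrix Idx33 Idx33 ℝ :=
  Matrix.of fun p q => f p.1 q.1 p.2 q.2

/-- The 33×33 propagation matrix `A*` of the imperfect augmented system:
the upper-left 24×24 block is the perfect-system propagation matrix,
all other entries are zero. -/
def AStar (g : V3) (RI : M3) (v pI pf pG : V3) : Matrix Idx33 Idx33 ℝ :=
  bm11 ![![0, 0, 0, 0, 0, 0, -RI, 0, 0, 0, 0],
         ![skew g, 0, 0, 0, 0, 0, -(skew v * RI), -RI, 0, 0, 0],
         ![0, 1, 0, 0, 0, 0, -(skew pI * RI), 0, 0, 0, 0],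
         ![0, 0, 0, 0, 0, 0, -(skew pf * RI), 0, 0, 0, 0],
         ![0, 0, 0, 0, 0, 0, -(skew pG * RI), 0, 0, 0, 0],
         ![0, 0, 0, 0, 0, 0, 0, 0, 0, 0, 0],
         ![0, 0, 0, 0, 0, 0, 0, 0, 0, 0, 0],
         ![0, 0, 0, 0, 0, 0, 0, 0, 0, 0, 0],
         ![0, 0, 0, 0, 0, 0, 0, 0, 0, 0, 0],
         ![0, 0, 0, 0, 0, 0, 0, 0, 0, 0, 0],
         ![0, 0, 0, 0, 0, 0, 0, 0, 0, 0, 0]]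

/-- The 33×10 unobservable-direction matrix `N*₁` (parametric in `R_G`; `N*₃` is the
same matrix evaluated at the first-estimate `R̂_{G0}`). -/
def NStar1 (g pF : V3) (RG : M3) : Matrix Idx33 Cols10 ℝ :=
  Matrix.of fun p j =>
    Sum.elim
      (fun _ => (![g, 0, 0, 0, 0, g, 0, 0, 0, 0, 0] : Fin 11 → V3) p.1 p.2)
      (fun q =>
        (![![0, 0, 0], ![0, 0, 0], ![1, 0, 0], ![1, 0, 0], ![1, -RG, 0],
           ![0, 0, 1], ![0, 0, 0], ![0, 0, 0], ![0, 0, -RGᵀ], ![0, 1, 0],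
           ![0, 1, skew pF * RGᵀ]] : Fin 11 → Fin 3 → M3) p.1 q.1 p.2 q.2) j

/-- A 2×33 measurement Jacobian `B ⬝ [f₀ ⋯ f₁₀]` from a 2×3 factor `B`
and an 11-tuple of 3×3 blocks. -/
def rowJac (B : Matrix (Fin 2) (Fin 3) ℝ) (f : Fin 11 → M3) : Matrix (Fin 2) Idx33 ℝ :=
  Matrix.of fun r p => (B * f p.1) r p.2

set_option linter.unreachableTactic false
set_option linter.unusedTactic false
set_option linter.unusedVariables false

open Nat in

lemma exp_mul_eq_of_mul_eq_zero {ι κ : Type*} [Fintype ι] [DecidableEq ι] [Fintype κ]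
    (A : Matrix ι ι ℝ) (N : Matrix ι κ ℝ) (h : A * N = 0) :
    NormedSpace.exp A * N = N := by
  letI : NormedRing (Matrix ι ι ℝ) := Matrix.linftyOpNormedRing
  letI : NormedAlgebra ℝ (Matrix ι ι ℝ) := Matrix.linftyOpNormedAlgebra
  letI : NormedAddCommGroup (Matrix ι κ ℝ) := Matrix.linftyOpNormedAddCommGroup
  letI : NormedSpace ℝ (Matrix ι κ ℝ) := Matrix.linftyOpNormedSpace
  have hs : Summable (fun n : ℕ => ((n ! : ℝ))⁻¹ • A ^ n) :=
    NormedSpace.expSeries_summable' A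
  let L : Matrix ι ι ℝ →ₗ[ℝ] Matrix ι κ ℝ :=
    { toFun := fun M => M * N
      map_add' := fun x y => Matrix.add_mul x y N
      map_smul' := fun c x => Matrix.smul_mul c x N }
  have key : (∑' n : ℕ, ((n ! : ℝ))⁻¹ • A ^ n) * N = ∑' n : ℕ, ((n ! : ℝ))⁻¹ • (A ^ n * N) := by
    have h2 := (L.toContinuousLinearMap).map_tsum hs
    simpa [L, LinearMap.toContinuousLinearMap, smul_mul_assoc] using h2
  rw [NormedSpace.exp_eq_tsum (𝕂 := ℝ), key, tsum_eq_single 0 ?_]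
  · simp
  · intro n hn
    obtain ⟨m, rfl⟩ := Nat.exists_eq_succ_of_ne_zero hn
    rw [pow_succ, Matrix.mul_assoc, h, Matrix.mul_zero, smul_zero]

section VecEval
variable {α : Type*} (x0 x1 x2 x3 x4 x5 x6 x7 x8 x9 x10 : α)
local notation "V" => (![x0,x1,x2,x3,x4,x5,x6,x7,x8,x9,x10] : Fin 11 → α)
lemma v11_0 : V 0 = x0 := rfl
lemma v11_1 : V 1 = x1 := rfl
lemma v11_2 : V 2 = x2 := rfl
lemma v11_3 : V 3 = x3 := rfl
lemma v11_4 : V 4 = x4 := rfl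
lemma v11_5 : V 5 = x5 := rfl
lemma v11_6 : V 6 = x6 := rfl
lemma v11_7 : V 7 = x7 := rfl
lemma v11_8 : V 8 = x8 := rfl
lemma v11_9 : V 9 = x9 := rfl
lemma v11_10 : V 10 = x10 := rfl
end VecEval

lemma vecHead_const {α : Type*} {n : ℕ} (x : α) :
    Matrix.vecHead (fun _ : Fin (n+1) => x) = x := rfl

lemma vecTail_const {α : Type*} {n : ℕ} (x : α) :
    Matrix.vecTail (fun _ : Fin (n+1) => x) = fun _ => x := rfl

lemma cc11_2 {α : Type*} (x y z : α) :
    Matrix.vecCons x (Matrix.vecCons y (fun _ : Fin 9 => z)) (2 : Fin 11) = z := rfl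
lemma cc11_3 {α : Type*} (x y z : α) :
    Matrix.vecCons x (Matrix.vecCons y (fun _ : Fin 9 => z)) (3 : Fin 11) = z := rfl
lemma cc11_4 {α : Type*} (x y z : α) :
    Matrix.vecCons x (Matrix.vecCons y (fun _ : Fin 9 => z)) (4 : Fin 11) = z := rfl
lemma cc11_5 {α : Type*} (x y z : α) :
    Matrix.vecCons x (Matrix.vecCons y (fun _ : Fin 9 => z)) (5 : Fin 11) = z := rfl
lemma cc11_6 {α : Type*} (x y z : α) :
    Matrix.vecCons x (Matrix.vecCons y (fun _ : Fin 9 => z)) (6 : Fin 11) = z := rfl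
lemma cc11_7 {α : Type*} (x y z : α) :
    Matrix.vecCons x (Matrix.vecCons y (fun _ : Fin 9 => z)) (7 : Fin 11) = z := rfl
lemma cc11_8 {α : Type*} (x y z : α) :
    Matrix.vecCons x (Matrix.vecCons y (fun _ : Fin 9 => z)) (8 : Fin 11) = z := rfl
lemma cc11_9 {α : Type*} (x y z : α) :
    Matrix.vecCons x (Matrix.vecCons y (fun _ : Fin 9 => z)) (9 : Fin 11) = z := rfl
lemma cc11_10 {α : Type*} (x y z : α) :
    Matrix.vecCons x (Matrix.vecCons y (fun _ : Fin 9 => z)) (10 : Fin 11) = z := rfl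



lemma stuck2 (M : M3) (a b : Fin 3) :
    Matrix.vecCons (0:M3) (fun i => Matrix.vecCons M (fun _ => (0:M3)) i) (2 : Fin 11) a b = 0 := rfl
lemma stuck3 (M : M3) (a b : Fin 3) :
    Matrix.vecCons (0:M3) (fun i => Matrix.vecCons M (fun _ => (0:M3)) i) (3 : Fin 11) a b = 0 := rfl
lemma stuck4 (M : M3) (a b : Fin 3) :
    Matrix.vecCons (0:M3) (fun i => Matrix.vecCons M (fun _ => (0:M3)) i) (4 : Fin 11) a b = 0 := rfl
lemma stuck6 (M : M3) (a b : Fin 3) :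
    Matrix.vecCons (0:M3) (fun i => Matrix.vecCons M (fun _ => (0:M3)) i) (6 : Fin 11) a b = 0 := rfl
lemma stuck7 (M : M3) (a b : Fin 3) :
    Matrix.vecCons (0:M3) (fun i => Matrix.vecCons M (fun _ => (0:M3)) i) (7 : Fin 11) a b = 0 := rfl
lemma stuck8 (M : M3) (a b : Fin 3) :
    Matrix.vecCons (0:M3) (fun i => Matrix.vecCons M (fun _ => (0:M3)) i) (8 : Fin 11) a b = 0 := rfl
lemma stuck9 (M : M3) (a b : Fin 3) :
    Matrix.vecCons (0:M3) (fun i => Matrix.vecCons M (fun _ => (0:M3)) i) (9 : Fin 11) a b = 0 := rfl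
lemma stuck10 (M : M3) (a b : Fin 3) :
    Matrix.vecCons (0:M3) (fun i => Matrix.vecCons M (fun _ => (0:M3)) i) (10 : Fin 11) a b = 0 := rfl

lemma stuck5 (M : M3) (a b : Fin 3) :
    Matrix.vecCons (0:M3) (fun i => Matrix.vecCons M (fun _ => (0:M3)) i) (5 : Fin 11) a b = 0 := rfl

lemma vec3_zero (c : Fin 3) : (![0, 0, 0] : Fin 3 → M3) c = 0 := by
  fin_cases c <;> rfl

set_option maxHeartbeats 8000000 in
lemma AStar_mul_NStar1 (g : V3) (RI : M3) (v pI pf pG : V3) (RG : M3) (pF : V3) :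
    AStar g RI v pI pf pG * NStar1 g pF RG = 0 := by
  ext ⟨i, a⟩ j
  fin_cases i <;> simp only [Matrix.mul_apply, AStar, NStar1, bm11, Matrix.of_apply, Fin.reduceFinMk, Matrix.cons_val] <;>
  · simp only [Matrix.mul_apply, AStar, NStar1, bm11, Matrix.of_apply,
      Fintype.sum_prod_type, Fin.sum_univ_succ, Fin.sum_univ_zero, Fin.isValue,
      v11_0, v11_1, v11_2, v11_3, v11_4, v11_5, v11_6, v11_7, v11_8, v11_9, v11_10,
      Matrix.cons_val_zero, Matrix.cons_val_one, Matrix.head_cons, Matrix.cons_val',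
      Matrix.cons_val_succ,
      Matrix.zero_apply, zero_mul, mul_zero, add_zero, zero_add, vecHead_const, vecTail_const, Matrix.head_cons, Matrix.tail_cons]
    all_goals rcases j with j | ⟨c, b⟩ <;>
      fin_cases a <;>
      (try simp [skew, vec3_zero, Matrix.mul_apply, Fin.sum_univ_three, Matrix.one_apply,
        Matrix.neg_apply, Sum.elim_inl, Sum.elim_inr,
        v11_0, v11_1, v11_2, v11_3, v11_4, v11_5, v11_6, v11_7, v11_8, v11_9, v11_10, vecHead_const, vecTail_const]) <;>
      (try ring) <;>
      (try simp only [stuck2, stuck3, stuck4, stuck5, stuck6, stuck7, stuck8, stuck9, stuck10, mul_zero, zero_mul, add_zero, zero_add]) <;>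
      (try ring) <;>
      (try simp)

/-- Propagation preserves the unobservable directions of the imperfect augmented
system: `A* N*₁ = 0`, hence `exp(δ A*) N*₁ = N*₁` for every `δ`. -/
theorem AStar_annihilates_NStar1 (g : V3) (RI : M3) (v pI pf pG : V3)
    (RG : M3) (pF : V3) :
    AStar g RI v pI pf pG * NStar1 g pF RG = 0 ∧
    ∀ δ : ℝ, NormedSpace.exp (δ • AStar g RI v pI pf pG) * NStar1 g pF RG =
      NStar1 g pF RG := by
  refine ⟨AStar_mul_NStar1 g RI v pI pf pG RG pF, fun δ => ?_⟩
  apply exp_mul_eq_of_mul_eq_zero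
  rw [Matrix.smul_mul, AStar_mul_NStar1, smul_zero]
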